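/- Let n ≥ 1, λ = (λ_1,…,λ_n) ∈ ℂⁿ with λ_ν ∉ ℤ_{≤0} for all ν, and μ ∈ ℂ with |λ| + μ ∉ ℤ_{≤0}. Then for every m ∈ ℕⁿ the numbers (λ)_m and (|λ|+μ)_{|m|} are nonzero, and the ℂ-linear maps K, L on the ring ℂ[[x_1,…,x_n]] of formal power series defined by K(Σ_m c_m x^m) = Σ_m [Γ(λ)/Γ(|λ|+μ)]·[(λ)_m/(|λ|+μ)_{|m|}]·c_m x^m and L(Σ_m c_m x^m) = Σ_m [Γ(|λ|+μ)/Γ(λ)]·[(|λ|+μ)_{|m|}/(λ)_m]·c_m x^m are mutually inverse bijections (K∘L = L∘K = identity); moreover, K and L map the subring of formal power series having a positive radius of convergence bijectively onto itself. -/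

import Mathlib

open Complex

noncomputable section

/-- The Pochhammer symbol `(a)ₖ = a(a+1)⋯(a+k-1)`. -/
def poch (a : ℂ) (k : ℕ) : ℂ := ∏ i ∈ Finset.range k, (a + i)

/-- The coefficient multiplier of the transformation `K_x^{μ,λ}`. -/
def Kcoef {n : ℕ} (lam : Fin n → ℂ) (μ : ℂ) (m : Fin n →₀ ℕ) : ℂ :=
  (∏ i, Complex.Gamma (lam i)) / Complex.Gamma ((∑ i, lam i) + μ) *
    ((∏ i, poch (lam i) (m i)) / poch ((∑ i, lam i) + μ) (m.sum fun _ k => k))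

/-- The coefficient multiplier of the transformation `L_x^{μ,λ}`. -/
def Lcoef {n : ℕ} (lam : Fin n → ℂ) (μ : ℂ) (m : Fin n →₀ ℕ) : ℂ :=
  Complex.Gamma ((∑ i, lam i) + μ) / (∏ i, Complex.Gamma (lam i)) *
    (poch ((∑ i, lam i) + μ) (m.sum fun _ k => k) / ∏ i, poch (lam i) (m i))

/-- The transformation `K_x^{μ,λ}` on formal power series. -/
def Kmap {n : ℕ} (lam : Fin n → ℂ) (μ : ℂ)
    (f : MvPowerSeries (Fin n) ℂ) : MvPowerSeries (Fin n) ℂ :=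
  fun m => Kcoef lam μ m * MvPowerSeries.coeff m f

/-- The transformation `L_x^{μ,λ}` on formal power series. -/
def Lmap {n : ℕ} (lam : Fin n → ℂ) (μ : ℂ)
    (f : MvPowerSeries (Fin n) ℂ) : MvPowerSeries (Fin n) ℂ :=
  fun m => Lcoef lam μ m * MvPowerSeries.coeff m f

/-- A formal power series has a positive radius of convergence. -/
def HasPosRadius {n : ℕ} (f : MvPowerSeries (Fin n) ℂ) : Prop :=
  ∃ r : ℝ, 0 < r ∧
    Summable (fun m : Fin n →₀ ℕ =>
      ‖MvPowerSeries.coeff m f‖ * r ^ (m.sum fun _ k => k))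


lemma poch_ne_zero {a : ℂ} (ha : ∀ k : ℤ, k ≤ 0 → a ≠ (k : ℂ)) (N : ℕ) : poch a N ≠ 0 := by
  refine Finset.prod_ne_zero_iff.2 fun i _ => ?_
  intro h
  exact ha (-i) (by omega) (by push_cast; linear_combination h)

lemma norm_poch (a : ℂ) (N : ℕ) : ‖poch a N‖ = ∏ i ∈ Finset.range N, ‖a + i‖ := by
  simp [poch]

-- lower bound c * (j+1) ≤ ‖a + j‖

lemma exists_lb {a : ℂ} (ha : ∀ k : ℤ, k ≤ 0 → a ≠ (k : ℂ)) :
    ∃ c : ℝ, 0 < c ∧ ∀ j : ℕ, c * (j + 1) ≤ ‖a + j‖ := by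
  set J : ℕ := ⌈2 * ‖a‖⌉₊ + 1 with hJ
  have hpos : ∀ j : ℕ, 0 < ‖a + j‖ := by
    intro j
    have : a + j ≠ 0 := by
      intro h
      exact ha (-j) (by omega) (by push_cast; linear_combination h)
    simpa [norm_pos_iff] using this
  set c : ℝ := min (1/2) ((Finset.range (J+1)).inf' (by simp) fun j => ‖a + j‖ / (j + 1)) with hc
  refine ⟨c, ?_, ?_⟩
  · refine lt_min (by norm_num) ?_
    refine (Finset.lt_inf'_iff _).2 fun j _ => ?_
    exact div_pos (hpos j) (by positivity)
  · intro j
    by_cases hj : j ≤ J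
    · have h1 : c ≤ ‖a + j‖ / (j + 1) := by
        refine (min_le_right _ _).trans ?_
        exact Finset.inf'_le _ (by simp [Finset.mem_range]; omega)
      have h2 : (0:ℝ) < (j:ℝ) + 1 := by positivity
      calc c * (j+1) ≤ (‖a + j‖ / (j + 1)) * (j+1) := by nlinarith
        _ = ‖a + j‖ := by field_simp
    · have hj' : 2 * ‖a‖ ≤ (j : ℝ) - 1 := by
        have : (J : ℝ) ≤ j := by exact_mod_cast Nat.le_of_lt (by omega)
        have h2 : 2 * ‖a‖ ≤ (⌈2 * ‖a‖⌉₊ : ℝ) := Nat.le_ceil _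
        have : ((⌈2 * ‖a‖⌉₊ : ℝ) + 1) ≤ j := by
          push_cast [hJ] at this ⊢; linarith
        linarith
      have h3 : ‖(j:ℂ)‖ - ‖a‖ ≤ ‖a + j‖ := by
        have := norm_sub_norm_le ((j:ℂ)) (-a)
        simpa [add_comm, sub_neg_eq_add] using this
      have h4 : ‖(j:ℂ)‖ = (j:ℝ) := by
        simp
      have h5 : c ≤ 1/2 := min_le_left _ _
      have h6 : (0:ℝ) ≤ (j:ℝ) + 1 := by positivity
      calc c * (j+1) ≤ (1/2) * (j+1) := by nlinarith
        _ ≤ (j:ℝ) - ‖a‖ := by nlinarith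
        _ ≤ ‖a + j‖ := by rw [← h4] at *; linarith

lemma poch_lb {a : ℂ} {c : ℝ} (hc : 0 < c) (h : ∀ j : ℕ, c * (j + 1) ≤ ‖a + j‖) (N : ℕ) :
    c ^ N * N.factorial ≤ ‖poch a N‖ := by
  rw [norm_poch]
  calc c ^ N * N.factorial = ∏ i ∈ Finset.range N, (c * (i + 1)) := by
        have hfac : ((N.factorial : ℝ)) = ∏ x ∈ Finset.range N, ((x:ℝ) + 1) := by
          rw [← Finset.prod_range_add_one_eq_factorial]; push_cast; ring
        rw [Finset.prod_mul_distrib, Finset.prod_const, Finset.card_range, hfac]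
    _ ≤ ∏ i ∈ Finset.range N, ‖a + i‖ := by
        refine Finset.prod_le_prod (fun i _ => by positivity) (fun i _ => h i)

lemma poch_ub (a : ℂ) (N : ℕ) :
    ‖poch a N‖ ≤ (‖a‖ + 1) ^ N * N.factorial := by
  rw [norm_poch]
  calc ∏ i ∈ Finset.range N, ‖a + i‖ ≤ ∏ i ∈ Finset.range N, ((‖a‖ + 1) * (i + 1)) := by
        refine Finset.prod_le_prod (fun i _ => by positivity) (fun i _ => ?_)
        have h1 : ‖a + (i:ℂ)‖ ≤ ‖a‖ + i := by
          calc ‖a + (i:ℂ)‖ ≤ ‖a‖ + ‖(i:ℂ)‖ := norm_add_le _ _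
            _ = ‖a‖ + i := by simp
        have h2 : (0:ℝ) ≤ ‖a‖ := norm_nonneg _
        nlinarith [Nat.cast_nonneg (α := ℝ) i]
    _ = (‖a‖ + 1) ^ N * N.factorial := by
        have hfac : ((N.factorial : ℝ)) = ∏ x ∈ Finset.range N, ((x:ℝ) + 1) := by
          rw [← Finset.prod_range_add_one_eq_factorial]; push_cast; ring
        rw [Finset.prod_mul_distrib, Finset.prod_const, Finset.card_range, hfac]

lemma choose_le_two_pow' (n k : ℕ) : n.choose k ≤ 2 ^ n := by
  rcases le_or_gt k n with hk | hk
  · calc n.choose k ≤ ∑ m ∈ Finset.range (n+1), n.choose m :=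
        Finset.single_le_sum (fun i _ => Nat.zero_le _) (by simp [Nat.lt_succ_iff, hk])
      _ = 2 ^ n := Nat.sum_range_choose n
  · simp [Nat.choose_eq_zero_of_lt hk]

lemma fact_sum_le {ι : Type*} [DecidableEq ι] (s : Finset ι) (f : ι → ℕ) :
    (∑ i ∈ s, f i).factorial ≤ (2 ^ s.card) ^ (∑ i ∈ s, f i) * ∏ i ∈ s, (f i).factorial := by
  induction s using Finset.induction with
  | empty => simp
  | @insert a s ha ih =>
    rw [Finset.sum_insert ha, Finset.prod_insert ha, Finset.card_insert_of_notMem ha]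
    set S := ∑ i ∈ s, f i
    have key : (f a + S).factorial = (f a + S).choose (f a) * (f a).factorial * S.factorial := by
      rw [add_comm (f a) S, mul_right_comm]
      exact (Nat.add_choose_mul_factorial_mul_factorial S (f a)).symm
    calc (f a + S).factorial
        = (f a + S).choose (f a) * (f a).factorial * S.factorial := key
      _ ≤ 2 ^ (f a + S) * (f a).factorial * ((2 ^ s.card) ^ S * ∏ i ∈ s, (f i).factorial) := by
          exact Nat.mul_le_mul (Nat.mul_le_mul_right _ (choose_le_two_pow' _ _)) ih
      _ = 2 ^ (f a + S + s.card * S) * ((f a).factorial * ∏ i ∈ s, (f i).factorial) := by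
          rw [← pow_mul]
          ring
      _ ≤ 2 ^ ((s.card + 1) * (f a + S)) * ((f a).factorial * ∏ i ∈ s, (f i).factorial) := by
          refine Nat.mul_le_mul_right _ (Nat.pow_le_pow_right (by norm_num) ?_)
          nlinarith [Nat.le_add_left S (f a)]
      _ = (2 ^ (s.card + 1)) ^ (f a + S) * ((f a).factorial * ∏ i ∈ s, (f i).factorial) := by
          rw [← pow_mul]

lemma sumN {n : ℕ} (m : Fin n →₀ ℕ) : (m.sum fun _ k => k) = ∑ i, m i :=
  Finsupp.sum_fintype _ _ (fun _ => rfl)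

lemma Kcoef_bound {n : ℕ} (lam : Fin n → ℂ) (μ : ℂ)
    (hμ : ∀ k : ℤ, k ≤ 0 → (∑ i, lam i) + μ ≠ (k : ℂ)) :
    ∃ C R : ℝ, 0 ≤ C ∧ 0 < R ∧
      ∀ m : Fin n →₀ ℕ, ‖Kcoef lam μ m‖ ≤ C * R ^ (m.sum fun _ k => k) := by
  obtain ⟨c, hc, hcb⟩ := exists_lb hμ
  set A : ℝ := 1 + ∑ i, ‖lam i‖ with hA
  have hA1 : 1 ≤ A := by
    have : (0:ℝ) ≤ ∑ i, ‖lam i‖ := Finset.sum_nonneg fun i _ => norm_nonneg _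
    linarith
  have hAi : ∀ i, ‖lam i‖ + 1 ≤ A := by
    intro i
    have : ‖lam i‖ ≤ ∑ j, ‖lam j‖ :=
      Finset.single_le_sum (fun j _ => norm_nonneg _) (Finset.mem_univ i)
    linarith
  refine ⟨‖(∏ i, Complex.Gamma (lam i)) / Complex.Gamma ((∑ i, lam i) + μ)‖, A / c,
    norm_nonneg _, by positivity, fun m => ?_⟩
  set N := m.sum fun _ k => k with hN
  have hNs : N = ∑ i, m i := sumN m
  have h1 : ∏ i, ‖poch (lam i) (m i)‖ ≤ A ^ N * (N.factorial : ℝ) := by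
    calc ∏ i, ‖poch (lam i) (m i)‖
        ≤ ∏ i, (A ^ (m i) * ((m i).factorial : ℝ)) := by
          refine Finset.prod_le_prod (fun i _ => norm_nonneg _) (fun i _ => ?_)
          refine (poch_ub _ _).trans ?_
          have := pow_le_pow_left₀ (by positivity) (hAi i) (m i)
          exact mul_le_mul_of_nonneg_right this (by positivity)
      _ = A ^ N * ∏ i, ((m i).factorial : ℝ) := by
          rw [Finset.prod_mul_distrib, Finset.prod_pow_eq_pow_sum, hNs]
      _ ≤ A ^ N * (N.factorial : ℝ) := by
          refine mul_le_mul_of_nonneg_left ?_ (by positivity)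
          have hdvd := Nat.prod_factorial_dvd_factorial_sum Finset.univ (fun i => m i)
          have := Nat.le_of_dvd (Nat.factorial_pos _) hdvd
          rw [hNs]
          calc (∏ i, ((m i).factorial : ℝ)) = ((∏ i, (m i).factorial : ℕ) : ℝ) := by push_cast; rfl
            _ ≤ _ := by exact_mod_cast this
  have h2 : c ^ N * (N.factorial : ℝ) ≤ ‖poch ((∑ i, lam i) + μ) N‖ := poch_lb hc hcb N
  have hfp : (0:ℝ) < (N.factorial : ℝ) := by exact_mod_cast N.factorial_pos
  rw [Kcoef, norm_mul]
  refine mul_le_mul_of_nonneg_left ?_ (norm_nonneg _)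
  rw [norm_div, norm_prod]
  calc (∏ i, ‖poch (lam i) (m i)‖) / ‖poch ((∑ i, lam i) + μ) N‖
      ≤ (A ^ N * (N.factorial : ℝ)) / (c ^ N * (N.factorial : ℝ)) :=
        div_le_div₀ (mul_nonneg (pow_nonneg (by linarith) N) hfp.le) h1
          (mul_pos (pow_pos hc N) hfp) h2
    _ = (A / c) ^ N := by
        rw [mul_div_mul_right _ _ (ne_of_gt hfp), div_pow]

lemma Lcoef_bound {n : ℕ} (hn : 1 ≤ n) (lam : Fin n → ℂ)
    (hlam : ∀ ν, ∀ k : ℤ, k ≤ 0 → lam ν ≠ (k : ℂ)) (μ : ℂ) :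
    ∃ C R : ℝ, 0 ≤ C ∧ 0 < R ∧
      ∀ m : Fin n →₀ ℕ, ‖Lcoef lam μ m‖ ≤ C * R ^ (m.sum fun _ k => k) := by
  have hne : (Finset.univ : Finset (Fin n)).Nonempty := ⟨⟨0, hn⟩, Finset.mem_univ _⟩
  choose cs hpos hbnd using fun i => exists_lb (hlam i)
  set c : ℝ := min 1 ((Finset.univ : Finset (Fin n)).inf' hne cs) with hcdef
  have hc : 0 < c := lt_min one_pos ((Finset.lt_inf'_iff _).2 fun i _ => hpos i)
  have hci : ∀ i, c ≤ cs i := fun i =>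
    (min_le_right _ _).trans (Finset.inf'_le _ (Finset.mem_univ i))
  set B : ℝ := ‖(∑ i, lam i) + μ‖ + 1 with hB
  have hB0 : 0 < B := by positivity
  refine ⟨‖Complex.Gamma ((∑ i, lam i) + μ) / ∏ i, Complex.Gamma (lam i)‖, B * 2 ^ n / c,
    norm_nonneg _, by positivity, fun m => ?_⟩
  set N := m.sum fun _ k => k with hN
  have hNs : N = ∑ i, m i := sumN m
  have h1 : ‖poch ((∑ i, lam i) + μ) N‖ ≤ B ^ N * (N.factorial : ℝ) := poch_ub _ _
  have hPf : (0:ℝ) < ∏ i, ((m i).factorial : ℝ) := by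
    refine Finset.prod_pos fun i _ => by exact_mod_cast (m i).factorial_pos
  have h2 : c ^ N * ∏ i, ((m i).factorial : ℝ) ≤ ∏ i, ‖poch (lam i) (m i)‖ := by
    calc c ^ N * ∏ i, ((m i).factorial : ℝ)
        = ∏ i, (c ^ (m i) * ((m i).factorial : ℝ)) := by
          rw [Finset.prod_mul_distrib, Finset.prod_pow_eq_pow_sum, hNs]
      _ ≤ ∏ i, ‖poch (lam i) (m i)‖ := by
          refine Finset.prod_le_prod (fun i _ => by positivity) (fun i _ => ?_)
          refine le_trans ?_ (poch_lb (hpos i) (hbnd i) (m i))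
          exact mul_le_mul_of_nonneg_right
            (pow_le_pow_left₀ (le_of_lt hc) (hci i) (m i)) (by positivity)
  have h3 : (N.factorial : ℝ) ≤ ((2:ℝ) ^ n) ^ N * ∏ i, ((m i).factorial : ℝ) := by
    have := fact_sum_le Finset.univ (fun i => m i)
    rw [Finset.card_univ, Fintype.card_fin] at this
    rw [hNs]
    exact_mod_cast this
  rw [Lcoef, norm_mul]
  refine mul_le_mul_of_nonneg_left ?_ (norm_nonneg _)
  rw [norm_div, norm_prod]
  calc ‖poch ((∑ i, lam i) + μ) N‖ / ∏ i, ‖poch (lam i) (m i)‖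
      ≤ (B ^ N * (N.factorial : ℝ)) / (c ^ N * ∏ i, ((m i).factorial : ℝ)) :=
        div_le_div₀ (mul_nonneg (pow_nonneg hB0.le N)
            (Nat.cast_nonneg _)) h1 (mul_pos (pow_pos hc N) hPf) h2
    _ ≤ (B ^ N * (((2:ℝ) ^ n) ^ N * ∏ i, ((m i).factorial : ℝ))) /
          (c ^ N * ∏ i, ((m i).factorial : ℝ)) := by
        gcongr
    _ = (B * 2 ^ n / c) ^ N := by
        rw [div_pow, mul_pow, ← mul_assoc,
          mul_div_mul_right _ _ (ne_of_gt hPf)]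

lemma hasPosRadius_mul {n : ℕ} (coef : (Fin n →₀ ℕ) → ℂ) (C R : ℝ) (hC : 0 ≤ C) (hR : 0 < R)
    (hb : ∀ m, ‖coef m‖ ≤ C * R ^ (m.sum fun _ k => k))
    (f : MvPowerSeries (Fin n) ℂ) (hf : HasPosRadius f) :
    HasPosRadius (fun m => coef m * MvPowerSeries.coeff m f) := by
  obtain ⟨r, hr, hsum⟩ := hf
  refine ⟨r / R, div_pos hr hR, ?_⟩
  refine Summable.of_nonneg_of_le (fun m => ?_) (fun m => ?_) (hsum.mul_left C)
  · have : (0:ℝ) < (r / R) ^ (m.sum fun _ k => k) := pow_pos (div_pos hr hR) _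
    exact mul_nonneg (norm_nonneg _) this.le
  · set N := m.sum fun _ k => k with hN
    have hco : MvPowerSeries.coeff m (fun m' => coef m' * MvPowerSeries.coeff m' f)
        = coef m * MvPowerSeries.coeff m f := rfl
    rw [hco, norm_mul]
    have key : ‖coef m‖ * ‖MvPowerSeries.coeff m f‖ * (r / R) ^ N
        ≤ (C * R ^ N) * ‖MvPowerSeries.coeff m f‖ * (r / R) ^ N := by
      have h1 : (0:ℝ) ≤ ‖MvPowerSeries.coeff m f‖ * (r / R) ^ N :=
        mul_nonneg (norm_nonneg _) (pow_pos (div_pos hr hR) _).le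
      calc ‖coef m‖ * ‖MvPowerSeries.coeff m f‖ * (r / R) ^ N
          = ‖coef m‖ * (‖MvPowerSeries.coeff m f‖ * (r / R) ^ N) := by ring
        _ ≤ (C * R ^ N) * (‖MvPowerSeries.coeff m f‖ * (r / R) ^ N) :=
            mul_le_mul_of_nonneg_right (hb m) h1
        _ = (C * R ^ N) * ‖MvPowerSeries.coeff m f‖ * (r / R) ^ N := by ring
    refine key.trans (le_of_eq ?_)
    rw [div_pow]
    field_simp

theorem stmt10 (n : ℕ) (hn : 1 ≤ n) (lam : Fin n → ℂ)
    (hlam : ∀ ν, ∀ k : ℤ, k ≤ 0 → lam ν ≠ (k : ℂ))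
    (μ : ℂ) (hμ : ∀ k : ℤ, k ≤ 0 → (∑ i, lam i) + μ ≠ (k : ℂ)) :
    (∀ m : Fin n →₀ ℕ,
      (∏ i, poch (lam i) (m i)) ≠ 0 ∧
        poch ((∑ i, lam i) + μ) (m.sum fun _ k => k) ≠ 0) ∧
    IsLinearMap ℂ (Kmap lam μ) ∧ IsLinearMap ℂ (Lmap lam μ) ∧
    (∀ f, Kmap lam μ (Lmap lam μ f) = f) ∧
    (∀ f, Lmap lam μ (Kmap lam μ f) = f) ∧
    Set.BijOn (Kmap lam μ) {f | HasPosRadius f} {f | HasPosRadius f} ∧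
    Set.BijOn (Lmap lam μ) {f | HasPosRadius f} {f | HasPosRadius f} := by

  have hpoch : ∀ m : Fin n →₀ ℕ,
      (∏ i, poch (lam i) (m i)) ≠ 0 ∧
        poch ((∑ i, lam i) + μ) (m.sum fun _ k => k) ≠ 0 := by
    intro m
    constructor
    · exact Finset.prod_ne_zero_iff.2 fun i _ => poch_ne_zero (hlam i) (m i)
    · exact poch_ne_zero hμ _
  have hG : (∏ i, Complex.Gamma (lam i)) ≠ 0 := by
    refine Finset.prod_ne_zero_iff.2 fun i _ => Complex.Gamma_ne_zero fun k => ?_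
    have := hlam i (-(k:ℤ)) (by omega)
    push_cast at this
    simpa using this
  have hGs : Complex.Gamma ((∑ i, lam i) + μ) ≠ 0 := by
    refine Complex.Gamma_ne_zero fun k => ?_
    have := hμ (-(k:ℤ)) (by omega)
    push_cast at this
    simpa using this
  have hKL1 : ∀ m : Fin n →₀ ℕ, Kcoef lam μ m * Lcoef lam μ m = 1 := by
    intro m
    obtain ⟨h1, h2⟩ := hpoch m
    rw [Kcoef, Lcoef]
    field_simp
  have hKL : ∀ f, Kmap lam μ (Lmap lam μ f) = f := by
    intro f
    funext m
    show Kcoef lam μ m * MvPowerSeries.coeff m (Lmap lam μ f) = f m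
    have : MvPowerSeries.coeff m (Lmap lam μ f)
        = Lcoef lam μ m * MvPowerSeries.coeff m f := rfl
    rw [this, ← mul_assoc, hKL1 m, one_mul]
    rfl
  have hLK : ∀ f, Lmap lam μ (Kmap lam μ f) = f := by
    intro f
    funext m
    show Lcoef lam μ m * MvPowerSeries.coeff m (Kmap lam μ f) = f m
    have : MvPowerSeries.coeff m (Kmap lam μ f)
        = Kcoef lam μ m * MvPowerSeries.coeff m f := rfl
    rw [this, ← mul_assoc, mul_comm (Lcoef lam μ m), hKL1 m, one_mul]
    rfl
  have hlinK : IsLinearMap ℂ (Kmap lam μ) := by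
    constructor
    · intro f g
      funext m
      show Kcoef lam μ m * MvPowerSeries.coeff m (f + g) = _
      rw [map_add, mul_add]
      rfl
    · intro a f
      funext m
      show Kcoef lam μ m * MvPowerSeries.coeff m (a • f) = _
      rw [map_smul, smul_eq_mul]
      show _ = a * (Kcoef lam μ m * MvPowerSeries.coeff m f)
      ring
  have hlinL : IsLinearMap ℂ (Lmap lam μ) := by
    constructor
    · intro f g
      funext m
      show Lcoef lam μ m * MvPowerSeries.coeff m (f + g) = _
      rw [map_add, mul_add]
      rfl
    · intro a f
      funext m
      show Lcoef lam μ m * MvPowerSeries.coeff m (a • f) = _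
      rw [map_smul, smul_eq_mul]
      show _ = a * (Lcoef lam μ m * MvPowerSeries.coeff m f)
      ring
  have hmapsK : Set.MapsTo (Kmap lam μ) {f | HasPosRadius f} {f | HasPosRadius f} := by
    obtain ⟨C, R, hC, hR, hb⟩ := Kcoef_bound lam μ hμ
    intro f hf
    exact hasPosRadius_mul _ C R hC hR hb f hf
  have hmapsL : Set.MapsTo (Lmap lam μ) {f | HasPosRadius f} {f | HasPosRadius f} := by
    obtain ⟨C, R, hC, hR, hb⟩ := Lcoef_bound hn lam hlam μ
    intro f hf
    exact hasPosRadius_mul _ C R hC hR hb f hf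
  refine ⟨hpoch, hlinK, hlinL, hKL, hLK, ?_, ?_⟩
  · exact Set.InvOn.bijOn ⟨fun f _ => hLK f, fun f _ => hKL f⟩ hmapsK hmapsL
  · exact Set.InvOn.bijOn ⟨fun f _ => hKL f, fun f _ => hLK f⟩ hmapsL hmapsK
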